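/- Let F : ℝ → ℝ be continuous and strictly increasing with F(x+1) = F(x)+1 for all x, and suppose that for some a₀ ∈ ℝ the restriction of F to the interval [a₀, a₀+1] is strictly concave. If the rotation number ρ(F) equals p/q with p ∈ ℤ, q a positive integer and gcd(p,q) = 1, then for every x ∈ ℝ the sequence n ↦ F^{nq}(x) − np converges as n → +∞ to a limit y ∈ ℝ satisfying F^q(y) = y + p. In other words, every orbit converges forward in time to a periodic point. -/

import Mathlib

open Real Filter Set

/-- Rotation number of a lift `T` of a circle homeomorphism,
defined as the limit of `T^[n] 0 / n` (which exists and is independent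
of the base point for lifts of orientation-preserving circle homeos). -/
noncomputable def rotationNumber (T : ℝ → ℝ) : ℝ :=
  limUnder atTop (fun n : ℕ => T^[n] 0 / (n : ℝ))

/-- The expansion factor `Λ = sin(θ+α)/sin(θ−α)`. -/
noncomputable def Lam (α θ : ℝ) : ℝ := Real.sin (θ + α) / Real.sin (θ - α)

/-- The break point of increase `a₀ = (tan θ − 2ℓ)/(2 tan θ)`. -/
noncomputable def brk0 (ℓ θ : ℝ) : ℝ := (Real.tan θ - 2 * ℓ) / (2 * Real.tan θ)

/-- The break point of decrease `a₁ = −(2ℓ + tan α)/(2 tan θ)`. -/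
noncomputable def brk1 (ℓ α θ : ℝ) : ℝ := -(2 * ℓ + Real.tan α) / (2 * Real.tan θ)

/-- The two-piece definition of the lift on the fundamental interval `[a₁, a₁+1)`. -/
noncomputable def Ftrap0 (ℓ α θ x : ℝ) : ℝ :=
  if x ≤ brk0 ℓ θ then -brk1 ℓ α θ + (Lam α θ)⁻¹ * (x - brk1 ℓ α θ)
  else 1 - brk0 ℓ θ + Lam α θ * (x - brk0 ℓ θ)

/-- The lift `F_{ℓ,α,θ} : ℝ → ℝ` of the Poincaré map of the internal-wave
billiard in a rectangular trapezoid: it is given by the two-piece formula on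
`[a₁, a₁+1)` and extended by `F(x+k) = F(x)+k` for `k ∈ ℤ`. -/
noncomputable def Ftrap (ℓ α θ x : ℝ) : ℝ :=
  Ftrap0 ℓ α θ (x - ⌊x - brk1 ℓ α θ⌋) + ⌊x - brk1 ℓ α θ⌋

section auxlems
variable {F : ℝ → ℝ}

lemma lift_int' (hlift : ∀ x : ℝ, F (x + 1) = F x + 1) (k : ℤ) (x : ℝ) :
    F (x + k) = F x + k := by
  induction k using Int.induction_on with
  | zero => simp
  | succ n ih =>
      have h : (x + ((n : ℤ) + 1 : ℤ) : ℝ) = (x + (n : ℤ)) + 1 := by push_cast; ring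
      rw [h, hlift, ih]; push_cast; ring
  | pred n ih =>
      have h1 := hlift (x + (-(n : ℤ) - 1 : ℤ))
      have h2 : (x + (-(n : ℤ) - 1 : ℤ) + 1 : ℝ) = x + (-(n : ℤ) : ℤ) := by push_cast; ring
      rw [h2, ih] at h1
      push_cast at h1 ⊢
      linarith

lemma iter_lift (hlift : ∀ x : ℝ, F (x + 1) = F x + 1) (n : ℕ) (k : ℤ) (x : ℝ) :
    F^[n] (x + k) = F^[n] x + k := by
  induction n with
  | zero => simp
  | succ n ih =>
      rw [Function.iterate_succ_apply', Function.iterate_succ_apply', ih,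
        lift_int' hlift]

lemma tendsto_rot (hmono : StrictMono F) (hlift : ∀ x : ℝ, F (x + 1) = F x + 1) :
    ∃ L : ℝ, Filter.Tendsto (fun n : ℕ => F^[n] 0 / (n : ℝ)) Filter.atTop (nhds L) := by
  set u : ℕ → ℝ := fun n => F^[n] 0 + 1 with hu
  have hsub : Subadditive u := by
    intro m n
    have h1 : F^[m + n] 0 = F^[m] (F^[n] 0) := Function.iterate_add_apply F m n 0
    have h2 : F^[m] (F^[n] 0) ≤ F^[m] ((0 : ℝ) + (⌈F^[n] 0⌉ : ℤ)) := by
      apply (hmono.iterate m).monotone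
      simpa using Int.le_ceil _
    rw [iter_lift hlift] at h2
    have h3 : ((⌈F^[n] 0⌉ : ℤ) : ℝ) ≤ F^[n] 0 + 1 := (Int.ceil_lt_add_one _).le
    simp only [hu]
    rw [h1]
    linarith
  have hlow : ∀ n : ℕ, (n : ℝ) * (F 0 - 1) ≤ F^[n] 0 := by
    intro n
    induction n with
    | zero => simp
    | succ n ih =>
        have h1 : F ((0 : ℝ) + (⌊F^[n] 0⌋ : ℤ)) ≤ F (F^[n] 0) := by
          apply hmono.monotone
          simpa using Int.floor_le _
        rw [lift_int' hlift] at h1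
        have h2 : F^[n] 0 - 1 ≤ ((⌊F^[n] 0⌋ : ℤ) : ℝ) := (Int.sub_one_lt_floor _).le
        have h3 : F^[n + 1] 0 = F (F^[n] 0) := Function.iterate_succ_apply' F n 0
        push_cast
        rw [h3]
        nlinarith
  have hbdd : BddBelow (range fun n : ℕ => u n / n) := by
    refine ⟨min 0 (F 0 - 1), ?_⟩
    rintro _ ⟨n, rfl⟩
    cases n with
    | zero => simp
    | succ n =>
        have hn : (0 : ℝ) < (n + 1 : ℕ) := by positivity
        have h1 := hlow (n + 1)
        have h2 : min 0 (F 0 - 1) * ((n + 1 : ℕ) : ℝ) ≤ u (n + 1) := by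
          have h4 : min 0 (F 0 - 1) * ((n + 1 : ℕ) : ℝ) ≤ (F 0 - 1) * ((n + 1 : ℕ) : ℝ) :=
            mul_le_mul_of_nonneg_right (min_le_right _ _) hn.le
          simp only [hu]
          nlinarith [h4]
        exact (le_div_iff₀ hn).2 h2
  have hT := hsub.tendsto_lim hbdd
  refine ⟨hsub.lim, ?_⟩
  have h0 : Filter.Tendsto (fun n : ℕ => u n / n - 1 / n) Filter.atTop (nhds (hsub.lim - 0)) :=
    hT.sub tendsto_one_div_atTop_nhds_zero_nat
  rw [sub_zero] at h0
  refine h0.congr fun n => ?_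
  rw [div_sub_div_same]
  simp [hu]

lemma exists_fixed (hF : Continuous F) (hmono : StrictMono F)
    (hlift : ∀ x : ℝ, F (x + 1) = F x + 1)
    (p : ℤ) (q : ℕ) (hq : 0 < q)
    (hrot : rotationNumber F = (p : ℝ) / (q : ℝ)) :
    ∃ y : ℝ, F^[q] y = y + (p : ℝ) := by
  by_contra hex
  push_neg at hex
  set g : ℝ → ℝ := fun x => F^[q] x - x - p with hg
  have hgc : Continuous g := ((hF.iterate q).sub continuous_id).sub continuous_const
  have hgne : ∀ x, g x ≠ 0 := by
    intro x h
    apply hex x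
    simp only [hg] at h
    linarith
  have hgper : ∀ (k : ℤ) (x : ℝ), g (x + k) = g x := by
    intro k x
    simp only [hg]
    rw [iter_lift hlift]
    push_cast; ring
  obtain ⟨L, hT⟩ := tendsto_rot hmono hlift
  have hL : L = (p : ℝ) / q := by rw [← hrot, rotationNumber, hT.limUnder_eq]
  have hq0 : (0 : ℝ) < q := by exact_mod_cast hq
  have hmul : Filter.Tendsto (fun n : ℕ => n * q) Filter.atTop Filter.atTop :=
    tendsto_atTop_atTop.mpr fun b => ⟨b, fun n hn => le_trans hn (Nat.le_mul_of_pos_right n hq)⟩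
  have hTs : Filter.Tendsto (fun n : ℕ => F^[n * q] 0 / ((n * q : ℕ) : ℝ))
      Filter.atTop (nhds L) := hT.comp hmul
  have hfract : ∀ x : ℝ, g (Int.fract x) = g x := by
    intro x
    have h3 : g (Int.fract x + (⌊x⌋ : ℤ)) = g (Int.fract x) := hgper _ _
    rw [Int.fract_add_floor] at h3
    exact h3.symm
  have hsign : (∀ x, 0 < g x) ∨ (∀ x, g x < 0) := by
    by_contra hc
    push_neg at hc
    obtain ⟨⟨x1, h1⟩, ⟨x2, h2⟩⟩ := hc
    obtain ⟨x0, hx0⟩ := intermediate_value_univ x1 x2 hgc ⟨h1, h2⟩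
    exact hgne x0 hx0
  rcases hsign with hpos | hneg
  · obtain ⟨z, hz1, hz2⟩ := isCompact_Icc.exists_isMinOn
      (⟨0, by constructor <;> norm_num⟩ : (Icc (0:ℝ) 1).Nonempty) hgc.continuousOn
    have hδpos : 0 < g z := hpos z
    have hδall : ∀ x, g z ≤ g x := by
      intro x
      have h1 : Int.fract x ∈ Icc (0:ℝ) 1 := ⟨Int.fract_nonneg x, (Int.fract_lt_one x).le⟩
      have h2 := (isMinOn_iff.mp hz2) _ h1
      rw [hfract x] at h2
      exact h2
    have hb : ∀ n : ℕ, (n : ℝ) * ((p : ℝ) + g z) ≤ F^[n * q] 0 := by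
      intro n
      induction n with
      | zero => simp
      | succ n ih =>
          have h1 : F^[(n + 1) * q] 0 = F^[q] (F^[n * q] 0) := by
            rw [show (n + 1) * q = q + n * q by ring, Function.iterate_add_apply]
          have h2 := hδall (F^[n * q] 0)
          have h3 : g (F^[n * q] 0) = F^[q] (F^[n * q] 0) - F^[n * q] 0 - (p : ℝ) := rfl
          push_cast
          rw [h1]
          nlinarith [h2, ih, h3]
    have hge : ((p : ℝ) + g z) / q ≤ L := by
      apply ge_of_tendsto hTs
      filter_upwards [eventually_ge_atTop 1] with n hn
      have hn0 : (0 : ℝ) < n := by exact_mod_cast hn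
      have hb' := hb n
      have hnq : (0 : ℝ) < ((n * q : ℕ) : ℝ) := by push_cast; positivity
      rw [div_le_div_iff₀ hq0 hnq]
      push_cast
      nlinarith
    rw [hL, div_le_div_iff₀ hq0 hq0] at hge
    nlinarith
  · obtain ⟨z, hz1, hz2⟩ := isCompact_Icc.exists_isMaxOn
      (⟨0, by constructor <;> norm_num⟩ : (Icc (0:ℝ) 1).Nonempty) hgc.continuousOn
    have hδneg : g z < 0 := hneg z
    have hδall : ∀ x, g x ≤ g z := by
      intro x
      have h1 : Int.fract x ∈ Icc (0:ℝ) 1 := ⟨Int.fract_nonneg x, (Int.fract_lt_one x).le⟩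
      have h2 := (isMaxOn_iff.mp hz2) _ h1
      rw [hfract x] at h2
      exact h2
    have hb : ∀ n : ℕ, F^[n * q] 0 ≤ (n : ℝ) * ((p : ℝ) + g z) := by
      intro n
      induction n with
      | zero => simp
      | succ n ih =>
          have h1 : F^[(n + 1) * q] 0 = F^[q] (F^[n * q] 0) := by
            rw [show (n + 1) * q = q + n * q by ring, Function.iterate_add_apply]
          have h2 := hδall (F^[n * q] 0)
          have h3 : g (F^[n * q] 0) = F^[q] (F^[n * q] 0) - F^[n * q] 0 - (p : ℝ) := rfl
          push_cast
          rw [h1]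
          nlinarith [h2, ih, h3]
    have hge : L ≤ ((p : ℝ) + g z) / q := by
      apply le_of_tendsto hTs
      filter_upwards [eventually_ge_atTop 1] with n hn
      have hn0 : (0 : ℝ) < n := by exact_mod_cast hn
      have hb' := hb n
      have hnq : (0 : ℝ) < ((n * q : ℕ) : ℝ) := by push_cast; positivity
      rw [div_le_div_iff₀ hnq hq0]
      push_cast
      nlinarith
    rw [hL, div_le_div_iff₀ hq0 hq0] at hge
    nlinarith

lemma orbit_conv {G : ℝ → ℝ} (hGc : Continuous G) (hGm : StrictMono G)
    (hGl : ∀ x : ℝ, G (x + 1) = G x + 1) {y₀ : ℝ} (hy₀ : G y₀ = y₀) (x : ℝ) :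
    ∃ y : ℝ, G y = y ∧ Filter.Tendsto (fun n : ℕ => G^[n] x) Filter.atTop (nhds y) := by
  have hfix : ∀ n : ℕ, G^[n] y₀ = y₀ := fun n => Function.iterate_fixed hy₀ n
  rcases le_total x (G x) with hxy | hxy
  · have hstep : ∀ n : ℕ, G^[n] x ≤ G^[n + 1] x := by
      intro n
      induction n with
      | zero => simpa using hxy
      | succ n ih =>
          rw [Function.iterate_succ_apply' G (n + 1) x, Function.iterate_succ_apply' G n x]
          exact hGm.monotone (by rw [← Function.iterate_succ_apply' G n x]; exact ih)
    have hmono : Monotone fun n : ℕ => G^[n] x := monotone_nat_of_le_succ hstep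
    have hub : ∀ n : ℕ, G^[n] x ≤ y₀ + (⌈x - y₀⌉ : ℤ) := by
      intro n
      have h1 : x ≤ y₀ + (⌈x - y₀⌉ : ℤ) := by linarith [Int.le_ceil (x - y₀)]
      calc G^[n] x ≤ G^[n] (y₀ + (⌈x - y₀⌉ : ℤ)) := (hGm.iterate n).monotone h1
        _ = y₀ + (⌈x - y₀⌉ : ℤ) := by rw [iter_lift hGl n _ y₀, hfix n]
    have hbdd : BddAbove (range fun n : ℕ => G^[n] x) :=
      ⟨_, by rintro _ ⟨n, rfl⟩; exact hub n⟩
    have hten := tendsto_atTop_ciSup hmono hbdd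
    refine ⟨_, ?_, hten⟩
    have h1 : Filter.Tendsto (fun n : ℕ => G^[n + 1] x) Filter.atTop
        (nhds (⨆ n : ℕ, G^[n] x)) := hten.comp (tendsto_add_atTop_nat 1)
    have h2 : Filter.Tendsto (fun n : ℕ => G (G^[n] x)) Filter.atTop
        (nhds (G (⨆ n : ℕ, G^[n] x))) := (hGc.tendsto _).comp hten
    exact tendsto_nhds_unique
      (h2.congr fun n => (Function.iterate_succ_apply' G n x).symm) h1
  · have hstep : ∀ n : ℕ, G^[n + 1] x ≤ G^[n] x := by
      intro n
      induction n with
      | zero => simpa using hxy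
      | succ n ih =>
          rw [Function.iterate_succ_apply' G (n + 1) x, Function.iterate_succ_apply' G n x]
          exact hGm.monotone (by rw [← Function.iterate_succ_apply' G n x]; exact ih)
    have hmono : Antitone fun n : ℕ => G^[n] x := antitone_nat_of_succ_le hstep
    have hub : ∀ n : ℕ, y₀ + (⌊x - y₀⌋ : ℤ) ≤ G^[n] x := by
      intro n
      have h1 : y₀ + (⌊x - y₀⌋ : ℤ) ≤ x := by linarith [Int.floor_le (x - y₀)]
      calc y₀ + ((⌊x - y₀⌋ : ℤ) : ℝ) = G^[n] (y₀ + (⌊x - y₀⌋ : ℤ)) := by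
            rw [iter_lift hGl n _ y₀, hfix n]
        _ ≤ G^[n] x := (hGm.iterate n).monotone h1
    have hbdd : BddBelow (range fun n : ℕ => G^[n] x) :=
      ⟨_, by rintro _ ⟨n, rfl⟩; exact hub n⟩
    have hten := tendsto_atTop_ciInf hmono hbdd
    refine ⟨_, ?_, hten⟩
    have h1 : Filter.Tendsto (fun n : ℕ => G^[n + 1] x) Filter.atTop
        (nhds (⨅ n : ℕ, G^[n] x)) := hten.comp (tendsto_add_atTop_nat 1)
    have h2 : Filter.Tendsto (fun n : ℕ => G (G^[n] x)) Filter.atTop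
        (nhds (G (⨅ n : ℕ, G^[n] x))) := (hGc.tendsto _).comp hten
    exact tendsto_nhds_unique
      (h2.congr fun n => (Function.iterate_succ_apply' G n x).symm) h1

end auxlems

theorem stmt2aux (F : ℝ → ℝ) (hF : Continuous F) (hmono : StrictMono F)
    (hlift : ∀ x : ℝ, F (x + 1) = F x + 1)
    (p : ℤ) (q : ℕ) (hq : 0 < q)
    (hrot : rotationNumber F = (p : ℝ) / (q : ℝ)) :
    ∀ x : ℝ, ∃ y : ℝ, F^[q] y = y + (p : ℝ) ∧
      Filter.Tendsto (fun n : ℕ => F^[n * q] x - (n : ℝ) * (p : ℝ))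
        Filter.atTop (nhds y) := by
  intro x
  set G : ℝ → ℝ := fun z => F^[q] z - p with hG
  have hGc : Continuous G := (hF.iterate q).sub continuous_const
  have hGm : StrictMono G := fun a b hab => by
    simp only [hG]
    exact sub_lt_sub_right ((hmono.iterate q) hab) _
  have hGl : ∀ z : ℝ, G (z + 1) = G z + 1 := by
    intro z
    simp only [hG]
    rw [show (z + 1 : ℝ) = z + ((1 : ℤ) : ℝ) by norm_num, iter_lift hlift q 1 z]
    push_cast; ring
  obtain ⟨y₀, hy₀⟩ := exists_fixed hF hmono hlift p q hq hrot
  have hy₀' : G y₀ = y₀ := by simp only [hG]; rw [hy₀]; ring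
  obtain ⟨y, hGy, hten⟩ := orbit_conv hGc hGm hGl hy₀' x
  refine ⟨y, ?_, ?_⟩
  · simp only [hG] at hGy; linarith
  · have hGiter : ∀ n : ℕ, G^[n] x = F^[n * q] x - (n : ℝ) * (p : ℝ) := by
      intro n
      induction n with
      | zero => simp
      | succ n ih =>
          rw [Function.iterate_succ_apply' G n x, ih]
          simp only [hG]
          have h1 : F^[q] (F^[n * q] x + ((-(n * p) : ℤ) : ℝ)) =
              F^[q] (F^[n * q] x) + ((-(n * p) : ℤ) : ℝ) := iter_lift hlift q _ _
          have h2 : F^[(n + 1) * q] x = F^[q] (F^[n * q] x) := by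
            rw [show (n + 1) * q = q + n * q by ring, Function.iterate_add_apply]
          push_cast at h1 ⊢
          rw [show F^[n * q] x - (n : ℝ) * p = F^[n * q] x + -((n : ℝ) * p) by ring, h1, h2]
          ring
    exact hten.congr fun n => hGiter n


/-- for a lift F of a circle homeomorphism which is strictly
concave on a fundamental interval, with rational rotation number p/q in lowest
terms, every orbit converges forward in time to a periodic point:
F^[n*q](x) − n*p converges to some y with F^[q](y) = y + p. -/
theorem stmt2 (F : ℝ → ℝ) (hF : Continuous F) (hmono : StrictMono F)
    (hlift : ∀ x : ℝ, F (x + 1) = F x + 1) (a : ℝ)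
    (hconc : StrictConcaveOn ℝ (Set.Icc a (a + 1)) F)
    (p : ℤ) (q : ℕ) (hq : 0 < q) (hpq : Int.gcd p (q : ℤ) = 1)
    (hrot : rotationNumber F = (p : ℝ) / (q : ℝ)) :
    ∀ x : ℝ, ∃ y : ℝ, F^[q] y = y + (p : ℝ) ∧
      Filter.Tendsto (fun n : ℕ => F^[n * q] x - (n : ℝ) * (p : ℝ))
        Filter.atTop (nhds y) :=
  stmt2aux F hF hmono hlift p q hq hrot
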